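/- Let d, d_P ≤ d be positive integers, P a rank-d_P orthogonal projection on ℂ^d, Q a Hermitian operator on ℂ^d, ρ_P = P/Tr(P), and Σ̄_k the normalized projection onto the symmetric subspace of (ℂ^d)^{⊗k}. Then Tr(Σ̄_{n+1}(P^{⊗n}⊗Q)) / Tr(Σ̄_n(P^{⊗n})) = (Tr(Q) + n·Tr(ρ_P Q)) / (d + n); in particular the limit as n → ∞ equals Tr(ρ_P Q). -/

import Mathlib

open Filter Topology
open scoped BigOperators

/-- The matrix of `P^{⊗n} ⊗ Q` acting on `(ℂ^d)^{⊗(n+1)}`. -/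
noncomputable def Amat (d : ℕ) (P Q : Matrix (Fin d) (Fin d) ℂ) (n : ℕ) :
    Matrix (Fin (n + 1) → Fin d) (Fin (n + 1) → Fin d) ℂ :=
  Matrix.of fun ι κ =>
    (∏ i : Fin n, P (ι i.castSucc) (κ i.castSucc)) * Q (ι (Fin.last n)) (κ (Fin.last n))

/-- The matrix of `P^{⊗n}` acting on `(ℂ^d)^{⊗n}`. -/
noncomputable def Bmat (d : ℕ) (P : Matrix (Fin d) (Fin d) ℂ) (n : ℕ) :
    Matrix (Fin n → Fin d) (Fin n → Fin d) ℂ :=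
  Matrix.of fun ι κ : Fin n → Fin d => ∏ i, P (ι i) (κ i)

namespace ABR

/-! ### The average of permutation matrices -/

noncomputable def Mmat (d n : ℕ) : Matrix (Fin n → Fin d) (Fin n → Fin d) ℂ :=
  (n.factorial : ℂ)⁻¹ • ∑ π : Equiv.Perm (Fin n),
    Matrix.of (fun ι κ : Fin n → Fin d => if κ = ι ∘ π then 1 else 0)

lemma Mmat_apply (d n : ℕ) (ι κ : Fin n → Fin d) :
    Mmat d n ι κ = (n.factorial : ℂ)⁻¹ * ∑ π : Equiv.Perm (Fin n),
      (if κ = ι ∘ π then 1 else 0) := by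
  simp [Mmat, Matrix.smul_apply, Matrix.sum_apply]

lemma Mmat_herm (d n : ℕ) : (Mmat d n).IsHermitian := by
  refine Matrix.IsHermitian.ext fun ι κ => ?_
  simp only [Mmat_apply, star_mul', star_inv₀, star_natCast, star_sum, apply_ite star,
    star_one, star_zero, mul_comm]
  congr 1
  rw [← Equiv.sum_comp (Equiv.inv (Equiv.Perm (Fin n)))
    (fun π => if κ = ι ∘ ⇑π then (1:ℂ) else 0)]
  refine Finset.sum_congr rfl fun π _ => ?_
  have : (κ = ι ∘ ⇑(Equiv.inv (Equiv.Perm (Fin n)) π)) ↔ (ι = κ ∘ ⇑π) := by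
    simp only [Equiv.inv_apply]
    constructor
    · rintro rfl; funext i; simp
    · rintro rfl; funext i; simp
  exact (if_congr this rfl rfl).symm

lemma Mmat_mulVec (d n : ℕ) (w : (Fin n → Fin d) → ℂ) (ι : Fin n → Fin d) :
    (Mmat d n).mulVec w ι = (n.factorial : ℂ)⁻¹ * ∑ π : Equiv.Perm (Fin n), w (ι ∘ π) := by
  simp only [Matrix.mulVec, dotProduct, Mmat_apply, mul_assoc, ← Finset.mul_sum]
  congr 1
  have h : ∀ κ, (∑ π : Equiv.Perm (Fin n), if κ = ι ∘ π then (1:ℂ) else 0) * w κ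
      = ∑ π : Equiv.Perm (Fin n), (if κ = ι ∘ π then w κ else 0) := fun κ => by
    rw [Finset.sum_mul]; exact Finset.sum_congr rfl fun π _ => by split <;> simp
  simp only [h]
  rw [Finset.sum_comm]
  refine Finset.sum_congr rfl fun π _ => ?_
  rw [Finset.sum_ite_eq' Finset.univ (ι ∘ π) w]
  simp

lemma Mmat_symm_out (d n : ℕ) (w : (Fin n → Fin d) → ℂ) (τ : Equiv.Perm (Fin n))
    (ι : Fin n → Fin d) : (Mmat d n).mulVec w (ι ∘ τ) = (Mmat d n).mulVec w ι := by
  rw [Mmat_mulVec, Mmat_mulVec]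
  congr 1
  rw [← Equiv.sum_comp (Equiv.mulLeft τ) (fun π => w (ι ∘ π))]
  rfl

lemma Mmat_fix (d n : ℕ) (w : (Fin n → Fin d) → ℂ)
    (hw : ∀ (π : Equiv.Perm (Fin n)) (ι : Fin n → Fin d), w (ι ∘ π) = w ι) :
    (Mmat d n).mulVec w = w := by
  funext ι
  rw [Mmat_mulVec]
  simp only [hw]
  rw [Finset.sum_const, Finset.card_univ, Fintype.card_perm, Fintype.card_fin]
  rw [nsmul_eq_mul, ← mul_assoc, inv_mul_cancel₀ (by exact_mod_cast n.factorial_ne_zero),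
    one_mul]

lemma ext_of_mulVec {m : Type*} [Fintype m] [DecidableEq m]
    (A B : Matrix m m ℂ) (h : ∀ w, A.mulVec w = B.mulVec w) : A = B := by
  ext i j
  have := congrFun (h (Pi.single j 1)) i
  simpa [Matrix.mulVec_single] using this

open Matrix in
lemma S_eq_Mmat (d n : ℕ) (S : Matrix (Fin n → Fin d) (Fin n → Fin d) ℂ)
    (hSherm : S.IsHermitian)
    (hSrange : ∀ (w : (Fin n → Fin d) → ℂ) (π : Equiv.Perm (Fin n))
        (ι : Fin n → Fin d), S.mulVec w (ι ∘ π) = S.mulVec w ι)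
    (hSfix : ∀ (w : (Fin n → Fin d) → ℂ),
      (∀ (π : Equiv.Perm (Fin n)) (ι : Fin n → Fin d), w (ι ∘ π) = w ι) →
        S.mulVec w = w) : S = Mmat d n := by
  have hSM : S * Mmat d n = Mmat d n := by
    refine ext_of_mulVec _ _ fun w => ?_
    rw [← Matrix.mulVec_mulVec]
    exact hSfix _ (fun π ι => Mmat_symm_out d n w π ι)
  have hMS : Mmat d n * S = S := by
    refine ext_of_mulVec _ _ fun w => ?_
    rw [← Matrix.mulVec_mulVec]
    exact Mmat_fix d n _ (fun π ι => hSrange w π ι)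
  calc S = (Mmat d n * S)ᴴ := by rw [hMS]; exact hSherm.symm
    _ = S * Mmat d n := by rw [Matrix.conjTranspose_mul, hSherm.eq, (Mmat_herm d n).eq]
    _ = Mmat d n := hSM

lemma trace_Mmat_mul (d n : ℕ) (X : Matrix (Fin n → Fin d) (Fin n → Fin d) ℂ) :
    (Mmat d n * X).trace
      = (n.factorial : ℂ)⁻¹ * ∑ π : Equiv.Perm (Fin n), ∑ ι, X (ι ∘ π) ι := by
  have key : ∀ ι, (∑ κ, Mmat d n ι κ * X κ ι)
      = (n.factorial : ℂ)⁻¹ * ∑ π : Equiv.Perm (Fin n), X (ι ∘ π) ι := by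
    intro ι
    simp only [Mmat_apply, mul_assoc]
    rw [← Finset.mul_sum]
    congr 1
    have h : ∀ κ, (∑ π : Equiv.Perm (Fin n), if κ = ι ∘ ⇑π then (1:ℂ) else 0) * X κ ι
        = ∑ π : Equiv.Perm (Fin n), (if κ = ι ∘ ⇑π then X κ ι else 0) := fun κ => by
      rw [Finset.sum_mul]; exact Finset.sum_congr rfl fun π _ => by split <;> simp
    simp only [h]
    rw [Finset.sum_comm]
    refine Finset.sum_congr rfl fun π _ => ?_
    rw [Finset.sum_ite_eq' Finset.univ (ι ∘ ⇑π) (fun κ => X κ ι)]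
    simp
  rw [Matrix.trace]
  simp only [Matrix.diag_apply, Matrix.mul_apply, key]
  rw [← Finset.mul_sum, Finset.sum_comm]

/-! ### The permutation-sum functional `F` and its recursion -/

noncomputable def F {d : ℕ} (P R : Matrix (Fin d) (Fin d) ℂ) (n : ℕ) : ℂ :=
  ∑ π : Equiv.Perm (Fin (n+1)), ∑ κ : Fin (n+1) → Fin d,
    (∏ i : Fin n, P (κ (π i.castSucc)) (κ i.castSucc)) * R (κ (π (Fin.last n))) (κ (Fin.last n))

lemma summand_eval {d n : ℕ} (P R : Matrix (Fin d) (Fin d) ℂ) (p : Fin (n+2))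
    (σ : Equiv.Perm (Fin (n+1))) :
    (∑ κ : Fin (n+2) → Fin d,
      (∏ i : Fin (n+1), P (κ (Equiv.Perm.decomposeFin.symm (p,σ) i.castSucc)) (κ i.castSucc)) *
        R (κ (Equiv.Perm.decomposeFin.symm (p,σ) (Fin.last (n+1)))) (κ (Fin.last (n+1))))
    = ∑ a : Fin d, ∑ κ' : Fin (n+1) → Fin d,
        P ((Fin.cons a κ' : Fin (n+2) → Fin d) p) a *
        ((∏ i : Fin n, P ((Fin.cons a κ' : Fin (n+2) → Fin d)
            (Equiv.swap 0 p ((σ i.castSucc).succ))) (κ' i.castSucc)) *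
          R ((Fin.cons a κ' : Fin (n+2) → Fin d)
            (Equiv.swap 0 p ((σ (Fin.last n)).succ))) (κ' (Fin.last n))) := by
  rw [← Equiv.sum_comp (Fin.consEquiv fun _ => Fin d), Fintype.sum_prod_type]
  refine Finset.sum_congr rfl fun a _ => Finset.sum_congr rfl fun κ' _ => ?_
  have hcons : ∀ x, (Fin.consEquiv fun _ : Fin (n+2) => Fin d) (a, κ') x
      = (Fin.cons a κ' : Fin (n+2) → Fin d) x := fun x => rfl
  rw [Fin.prod_univ_succ]
  simp only [hcons]
  rw [mul_assoc]
  congr 1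
  · rw [Fin.castSucc_zero, Equiv.Perm.decomposeFin_symm_apply_zero, Fin.cons_zero]
  congr 1
  · refine Finset.prod_congr rfl fun i _ => ?_
    rw [← Fin.succ_castSucc, Equiv.Perm.decomposeFin_symm_apply_succ, Fin.cons_succ]
  · rw [← Fin.succ_last, Equiv.Perm.decomposeFin_symm_apply_succ, Fin.cons_succ]

lemma swap_succ_eval {n : ℕ} (b x : Fin (n+1)) :
    Equiv.swap 0 b.succ x.succ = if x = b then 0 else x.succ := by
  by_cases h : x = b
  · subst h; simp [Equiv.swap_apply_right]
  · rw [Equiv.swap_apply_of_ne_of_ne (Fin.succ_ne_zero x) (by simpa [Fin.succ_inj] using h)]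
    simp [h]

lemma cons_ite {d n : ℕ} (a : Fin d) (κ' : Fin (n+1) → Fin d) (c : Prop) [Decidable c]
    (x : Fin (n+1)) :
    (Fin.cons a κ' : Fin (n+2) → Fin d) (if c then 0 else x.succ) = if c then a else κ' x := by
  split <;> simp

lemma inner_case {d n : ℕ} (P R : Matrix (Fin d) (Fin d) ℂ) (hPproj : P * P = P)
    (b : Fin (n+1)) (σ : Equiv.Perm (Fin (n+1))) :
    (∑ a : Fin d, ∑ κ' : Fin (n+1) → Fin d,
        P ((Fin.cons a κ' : Fin (n+2) → Fin d) b.succ) a *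
        ((∏ i : Fin n, P ((Fin.cons a κ' : Fin (n+2) → Fin d)
            (Equiv.swap 0 b.succ ((σ i.castSucc).succ))) (κ' i.castSucc)) *
          R ((Fin.cons a κ' : Fin (n+2) → Fin d)
            (Equiv.swap 0 b.succ ((σ (Fin.last n)).succ))) (κ' (Fin.last n))))
    = if σ (Fin.last n) = b
      then ∑ κ' : Fin (n+1) → Fin d, (∏ i : Fin n, P (κ' (σ i.castSucc)) (κ' i.castSucc)) *
        (P * R) (κ' (σ (Fin.last n))) (κ' (Fin.last n))
      else ∑ κ' : Fin (n+1) → Fin d, (∏ i : Fin n, P (κ' (σ i.castSucc)) (κ' i.castSucc)) *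
        R (κ' (σ (Fin.last n))) (κ' (Fin.last n)) := by
  simp only [Fin.cons_succ, swap_succ_eval, cons_ite]
  rw [Finset.sum_comm]
  by_cases hlast : σ (Fin.last n) = b
  · rw [if_pos hlast]
    refine Finset.sum_congr rfl fun κ' _ => ?_
    have hne : ∀ i : Fin n, ¬ (σ i.castSucc = b) := by
      intro i hi
      exact (Fin.castSucc_lt_last i).ne (σ.injective (hi.trans hlast.symm))
    simp only [if_pos hlast, if_neg (hne _)]
    rw [hlast, Matrix.mul_apply, Finset.mul_sum]
    exact Finset.sum_congr rfl fun x _ => by ring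
  · rw [if_neg hlast]
    have h0 : σ⁻¹ b ≠ Fin.last n := by
      intro h
      exact hlast (by rw [← h, Equiv.Perm.inv_def, Equiv.apply_symm_apply])
    obtain ⟨j₀, hj₀⟩ := Fin.exists_castSucc_eq.mpr h0
    have hb : σ j₀.castSucc = b := by rw [hj₀, Equiv.Perm.inv_def, Equiv.apply_symm_apply]
    have hcond : ∀ i : Fin n, (σ i.castSucc = b) ↔ (i = j₀) := by
      intro i
      constructor
      · intro h; exact Fin.castSucc_inj.mp (σ.injective (h.trans hb.symm))
      · rintro rfl; exact hb
    refine Finset.sum_congr rfl fun κ' _ => ?_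
    simp only [if_neg hlast]
    have hprod : ∀ a : Fin d,
        (∏ i : Fin n, P (if σ i.castSucc = b then a else κ' (σ i.castSucc)) (κ' i.castSucc))
        = P a (κ' j₀.castSucc) *
            ∏ i ∈ Finset.univ.erase j₀, P (κ' (σ i.castSucc)) (κ' i.castSucc) := by
      intro a
      rw [← Finset.mul_prod_erase Finset.univ _ (Finset.mem_univ j₀)]
      congr 1
      · rw [if_pos hb]
      · refine Finset.prod_congr rfl fun i hi => ?_
        rw [if_neg (fun h => (Finset.mem_erase.mp hi).1 ((hcond i).mp h))]
    simp only [hprod]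
    calc (∑ a : Fin d, P (κ' b) a * ((P a (κ' j₀.castSucc) *
            ∏ i ∈ Finset.univ.erase j₀, P (κ' (σ i.castSucc)) (κ' i.castSucc)) *
            R (κ' (σ (Fin.last n))) (κ' (Fin.last n))))
        = (∑ a : Fin d, P (κ' b) a * P a (κ' j₀.castSucc)) *
            ((∏ i ∈ Finset.univ.erase j₀, P (κ' (σ i.castSucc)) (κ' i.castSucc)) *
            R (κ' (σ (Fin.last n))) (κ' (Fin.last n))) := by
          rw [Finset.sum_mul]; exact Finset.sum_congr rfl fun a _ => by ring
      _ = P (κ' b) (κ' j₀.castSucc) *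
            ((∏ i ∈ Finset.univ.erase j₀, P (κ' (σ i.castSucc)) (κ' i.castSucc)) *
            R (κ' (σ (Fin.last n))) (κ' (Fin.last n))) := by
          rw [← Matrix.mul_apply, hPproj]
      _ = (∏ i : Fin n, P (κ' (σ i.castSucc)) (κ' i.castSucc)) *
            R (κ' (σ (Fin.last n))) (κ' (Fin.last n)) := by
          rw [← Finset.mul_prod_erase Finset.univ
            (fun i => P (κ' (σ i.castSucc)) (κ' i.castSucc)) (Finset.mem_univ j₀), hb, mul_assoc]

lemma inner_zero {d n : ℕ} (P R : Matrix (Fin d) (Fin d) ℂ) (σ : Equiv.Perm (Fin (n+1))) :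
    (∑ a : Fin d, ∑ κ' : Fin (n+1) → Fin d,
        P ((Fin.cons a κ' : Fin (n+2) → Fin d) 0) a *
        ((∏ i : Fin n, P ((Fin.cons a κ' : Fin (n+2) → Fin d)
            (Equiv.swap 0 0 ((σ i.castSucc).succ))) (κ' i.castSucc)) *
          R ((Fin.cons a κ' : Fin (n+2) → Fin d)
            (Equiv.swap 0 0 ((σ (Fin.last n)).succ))) (κ' (Fin.last n))))
    = P.trace * ∑ κ' : Fin (n+1) → Fin d,
        (∏ i : Fin n, P (κ' (σ i.castSucc)) (κ' i.castSucc)) *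
          R (κ' (σ (Fin.last n))) (κ' (Fin.last n)) := by
  simp only [Equiv.swap_self, Equiv.refl_apply, Fin.cons_zero, Fin.cons_succ]
  rw [Matrix.trace, Finset.sum_mul]
  exact Finset.sum_congr rfl fun a _ => by
    rw [Finset.mul_sum]
    exact Finset.sum_congr rfl fun κ' _ => by rw [Matrix.diag_apply]

lemma sum_ite_count {n : ℕ} (c : Fin (n+1)) (X Y : ℂ) :
    (∑ b : Fin (n+1), if c = b then X else Y) = X + (n : ℂ) * Y := by
  have h : ∀ b : Fin (n+1), (if c = b then X else Y) = Y + (if c = b then X - Y else 0) := by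
    intro b; split <;> ring
  simp only [h]
  rw [Finset.sum_add_distrib, Finset.sum_const, Finset.sum_ite_eq Finset.univ c fun _ => X - Y]
  simp [Finset.card_univ]
  ring

lemma F_succ {d dP : ℕ} (P : Matrix (Fin d) (Fin d) ℂ) (hPproj : P * P = P)
    (hPtr : P.trace = (dP : ℂ)) (R : Matrix (Fin d) (Fin d) ℂ) (n : ℕ) :
    F P R (n+1) = ((dP : ℂ) + n) * F P R n + F P (P * R) n := by
  have e1 : F P R (n+1)
      = ∑ p : Fin (n+2), ∑ σ : Equiv.Perm (Fin (n+1)), ∑ a : Fin d,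
          ∑ κ' : Fin (n+1) → Fin d,
          P ((Fin.cons a κ' : Fin (n+2) → Fin d) p) a *
          ((∏ i : Fin n, P ((Fin.cons a κ' : Fin (n+2) → Fin d)
              (Equiv.swap 0 p ((σ i.castSucc).succ))) (κ' i.castSucc)) *
            R ((Fin.cons a κ' : Fin (n+2) → Fin d)
              (Equiv.swap 0 p ((σ (Fin.last n)).succ))) (κ' (Fin.last n))) := by
    rw [F, ← Equiv.sum_comp (Equiv.Perm.decomposeFin.symm), Fintype.sum_prod_type]
    exact Finset.sum_congr rfl fun p _ => Finset.sum_congr rfl fun σ _ => summand_eval P R p σ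
  rw [e1, Fin.sum_univ_succ]
  simp only [inner_zero P R, inner_case P R hPproj]
  rw [Finset.sum_comm]
  simp only [sum_ite_count]
  rw [Finset.sum_add_distrib, ← Finset.mul_sum, ← Finset.mul_sum, hPtr]
  show (dP : ℂ) * F P R n + (F P (P * R) n + (n : ℂ) * F P R n)
      = ((dP : ℂ) + n) * F P R n + F P (P * R) n
  ring

/-! ### Closed forms -/

lemma F_zero' {d : ℕ} (P R : Matrix (Fin d) (Fin d) ℂ) : F P R 0 = R.trace := by
  rw [F]
  have hsub : ∀ π : Equiv.Perm (Fin (0+1)), π = 1 := by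
    intro π; ext x
    have : ∀ y : Fin (0+1), y = 0 := fun y => Fin.eq_zero y
    rw [this (π x), this ((1 : Equiv.Perm (Fin (0+1))) x)]
  rw [Finset.sum_eq_single 1 (fun π _ hne => absurd (hsub π) hne) (by simp)]
  rw [← Equiv.sum_comp (Equiv.funUnique (Fin 1) (Fin d)).symm]
  simp [Matrix.trace, Equiv.funUnique]

lemma F_P {d dP : ℕ} (P : Matrix (Fin d) (Fin d) ℂ) (hPproj : P * P = P)
    (hPtr : P.trace = (dP : ℂ)) : ∀ n, F P P n = (dP.ascFactorial (n+1) : ℂ)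
  | 0 => by rw [F_zero', hPtr]; simp [Nat.ascFactorial]
  | n+1 => by
    have hnat : dP.ascFactorial (n+1+1) = (dP + (n+1)) * dP.ascFactorial (n+1) :=
      Nat.ascFactorial_succ
    rw [F_succ P hPproj hPtr, hPproj, F_P P hPproj hPtr n, hnat]
    push_cast
    ring

lemma F_PQ {d dP : ℕ} (P Q : Matrix (Fin d) (Fin d) ℂ) (hPproj : P * P = P)
    (hPtr : P.trace = (dP : ℂ)) :
    ∀ n, F P (P * Q) n = ((dP+1).ascFactorial n : ℂ) * (P * Q).trace
  | 0 => by rw [F_zero']; simp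
  | n+1 => by
    have hnat : (dP+1).ascFactorial (n+1) = (dP+1+n) * (dP+1).ascFactorial n :=
      Nat.ascFactorial_succ
    rw [F_succ P hPproj hPtr, show P * (P * Q) = P * Q by rw [← mul_assoc, hPproj],
      F_PQ P Q hPproj hPtr n, hnat]
    push_cast
    ring

lemma F_Q {d dP : ℕ} (P Q : Matrix (Fin d) (Fin d) ℂ) (hPproj : P * P = P)
    (hPtr : P.trace = (dP : ℂ)) :
    ∀ n, (dP : ℂ) * F P Q n
      = (dP.ascFactorial n : ℂ) * ((dP : ℂ) * Q.trace + (n : ℂ) * (P * Q).trace)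
  | 0 => by rw [F_zero']; simp [Nat.ascFactorial]
  | n+1 => by
    have key : (dP : ℂ) * ((dP+1).ascFactorial n : ℂ)
        = ((dP + n) : ℂ) * (dP.ascFactorial n : ℂ) := by
      have := Nat.succ_ascFactorial dP n
      exact_mod_cast congrArg (Nat.cast : ℕ → ℂ) this
    calc (dP : ℂ) * F P Q (n+1)
        = ((dP : ℂ) + n) * ((dP : ℂ) * F P Q n) + (dP : ℂ) * F P (P * Q) n := by
          rw [F_succ P hPproj hPtr]; ring
      _ = ((dP : ℂ) + n) * ((dP.ascFactorial n : ℂ) *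
              ((dP : ℂ) * Q.trace + (n : ℂ) * (P * Q).trace))
          + (((dP : ℂ) + (n:ℂ)) * (dP.ascFactorial n : ℂ)) * (P * Q).trace := by
          rw [F_Q P Q hPproj hPtr n, F_PQ P Q hPproj hPtr n,
            show (dP:ℂ) * (((dP+1).ascFactorial n : ℂ) * (P*Q).trace)
              = (((dP:ℂ) + (n:ℂ)) * (dP.ascFactorial n : ℂ)) * (P*Q).trace from by
                rw [← mul_assoc, key]]
      _ = (dP.ascFactorial (n+1) : ℂ) * ((dP : ℂ) * Q.trace + (((n+1 : ℕ)):ℂ) * (P * Q).trace) := by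
          rw [show dP.ascFactorial (n+1) = (dP + n) * dP.ascFactorial n from Nat.ascFactorial_succ]
          push_cast
          ring

/-! ### `G` (the `Bmat` permutation sum) -/

lemma G_eval {d dP : ℕ} (P : Matrix (Fin d) (Fin d) ℂ) (hPproj : P * P = P)
    (hPtr : P.trace = (dP : ℂ)) :
    ∀ n, (∑ π : Equiv.Perm (Fin n), ∑ ι : Fin n → Fin d, ∏ i, P (ι (π i)) (ι i))
      = (dP.ascFactorial n : ℂ)
  | 0 => by simp [Nat.ascFactorial]
  | n+1 => by
    have : (∑ π : Equiv.Perm (Fin (n+1)), ∑ ι : Fin (n+1) → Fin d, ∏ i, P (ι (π i)) (ι i))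
        = F P P n := by
      refine Finset.sum_congr rfl fun π _ => Finset.sum_congr rfl fun ι _ => ?_
      rw [Fin.prod_univ_castSucc]
    rw [this, F_P P hPproj hPtr n]


lemma ratio_calc (Fq ascP ascD TrQ c dPc dc nc fac fac1 C1 C2 : ℂ)
    (h1 : fac1 * C1 = (dc + nc) * ascD) (h2 : fac * C2 = ascD)
    (hF : dPc * Fq = ascP * (dPc * TrQ + nc * c))
    (hascP : ascP ≠ 0) (hascD : ascD ≠ 0) (hdP : dPc ≠ 0) (hdn : dc + nc ≠ 0)
    (hfac : fac ≠ 0) (hfac1 : fac1 ≠ 0) (hC1 : C1 ≠ 0) (hC2 : C2 ≠ 0) :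
    ((fac1⁻¹ * Fq) / C1) / ((fac⁻¹ * ascP) / C2) = (TrQ + nc * (c / dPc)) / (dc + nc) := by
  have hL : ((fac1⁻¹ * Fq) / C1) / ((fac⁻¹ * ascP) / C2)
      = (Fq * (fac * C2)) / (ascP * (fac1 * C1)) := by
    simp only [div_eq_mul_inv, mul_inv_rev, inv_inv]
    ring
  have hR : (TrQ + nc * (c / dPc)) / (dc + nc) = (dPc * TrQ + nc * c) / (dPc * (dc + nc)) := by
    field_simp
  rw [hL, hR, h1, h2]
  rw [div_eq_div_iff (by exact mul_ne_zero hascP (mul_ne_zero hdn hascD))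
    (mul_ne_zero hdP hdn)]
  linear_combination (ascD * (dc + nc)) * hF


end ABR

theorem asymptotic_born_rule (d dP : ℕ) (hd : 0 < d) (hdP : 1 ≤ dP) (hdPd : dP ≤ d)
    (P Q : Matrix (Fin d) (Fin d) ℂ)
    (hPherm : P.IsHermitian) (hPproj : P * P = P) (hPtr : P.trace = (dP : ℂ))
    (hQ : Q.IsHermitian)
    (S : (n : ℕ) → Matrix (Fin n → Fin d) (Fin n → Fin d) ℂ)
    (hSherm : ∀ n, (S n).IsHermitian)
    (hSrange : ∀ (n : ℕ) (w : (Fin n → Fin d) → ℂ) (π : Equiv.Perm (Fin n))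
        (ι : Fin n → Fin d), (S n).mulVec w (ι ∘ π) = (S n).mulVec w ι)
    (hSfix : ∀ (n : ℕ) (w : (Fin n → Fin d) → ℂ),
      (∀ (π : Equiv.Perm (Fin n)) (ι : Fin n → Fin d), w (ι ∘ π) = w ι) →
        (S n).mulVec w = w) :
    (∀ n : ℕ,
      ((S (n + 1) * Amat d P Q n).trace / (((n + 1) + d - 1).choose (n + 1) : ℂ)) /
          ((S n * Bmat d P n).trace / ((n + d - 1).choose n : ℂ))
        = (Q.trace + (n : ℂ) * ((P * Q).trace / (dP : ℂ))) / ((d : ℂ) + (n : ℂ))) ∧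
    Tendsto
      (fun n : ℕ =>
        ((S (n + 1) * Amat d P Q n).trace / (((n + 1) + d - 1).choose (n + 1) : ℂ)) /
          ((S n * Bmat d P n).trace / ((n + d - 1).choose n : ℂ)))
      atTop (𝓝 ((P * Q).trace / (dP : ℂ))) := by
  have hMS : ∀ n, S n = ABR.Mmat d n := fun n =>
    ABR.S_eq_Mmat d n (S n) (hSherm n) (hSrange n) (hSfix n)
  have hnum : ∀ n : ℕ, (S (n+1) * Amat d P Q n).trace
      = ((n+1).factorial : ℂ)⁻¹ * ABR.F P Q n := by
    intro n
    rw [hMS, ABR.trace_Mmat_mul]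
    rfl
  have hden : ∀ n : ℕ, (S n * Bmat d P n).trace
      = (n.factorial : ℂ)⁻¹ * (dP.ascFactorial n : ℂ) := by
    intro n
    rw [hMS, ABR.trace_Mmat_mul, ← ABR.G_eval P hPproj hPtr n]
    rfl
  have hdPne : (dP : ℂ) ≠ 0 := Nat.cast_ne_zero.mpr (by omega)
  have hdnn : ∀ n : ℕ, ((d : ℂ) + (n : ℂ)) ≠ 0 := by
    intro n h
    have h2 : ((d + n : ℕ) : ℂ) = 0 := by rw [Nat.cast_add]; exact h
    have := Nat.cast_eq_zero.mp h2
    omega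
  have hratio : ∀ n : ℕ,
      ((S (n + 1) * Amat d P Q n).trace / (((n + 1) + d - 1).choose (n + 1) : ℂ)) /
          ((S n * Bmat d P n).trace / ((n + d - 1).choose n : ℂ))
        = (Q.trace + (n : ℂ) * ((P * Q).trace / (dP : ℂ))) / ((d : ℂ) + (n : ℂ)) := by
    intro n
    have hC1nat : (n+1) + d - 1 = n + d := by omega
    have hC2pos : 0 < (n + d - 1).choose n := Nat.choose_pos (by omega)
    have hC1pos : 0 < (n + d).choose (n+1) := Nat.choose_pos (by omega)
    have hascDpos : 0 < d.ascFactorial n := by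
      have := Nat.ascFactorial_pos (d-1) n
      rwa [Nat.sub_add_cancel (by omega)] at this
    have hascPpos : 0 < dP.ascFactorial n := by
      have := Nat.ascFactorial_pos (dP-1) n
      rwa [Nat.sub_add_cancel hdP] at this
    have h2nat : n.factorial * ((n + d - 1).choose n) = d.ascFactorial n := by
      have h := Nat.ascFactorial_eq_factorial_mul_choose' d n
      rw [show d + n - 1 = n + d - 1 from by omega] at h
      exact h.symm
    have h1nat : (n+1).factorial * ((n + d).choose (n+1)) = (d + n) * d.ascFactorial n := by
      have h := Nat.ascFactorial_eq_factorial_mul_choose' d (n+1)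
      rw [show d + (n+1) - 1 = n + d from by omega] at h
      rw [← h, Nat.ascFactorial_succ]
    rw [hnum n, hden n, hC1nat]
    refine ABR.ratio_calc (ABR.F P Q n) (dP.ascFactorial n : ℂ) (d.ascFactorial n : ℂ)
      Q.trace (P*Q).trace (dP:ℂ) (d:ℂ) (n:ℂ) (n.factorial : ℂ) ((n+1).factorial : ℂ)
      ((n+d).choose (n+1) : ℂ) ((n+d-1).choose n : ℂ)
      (by exact_mod_cast h1nat) (by exact_mod_cast h2nat)
      (ABR.F_Q P Q hPproj hPtr n)
      (Nat.cast_ne_zero.mpr hascPpos.ne') (Nat.cast_ne_zero.mpr hascDpos.ne')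
      hdPne (hdnn n)
      (Nat.cast_ne_zero.mpr n.factorial_ne_zero)
      (Nat.cast_ne_zero.mpr (n+1).factorial_ne_zero)
      (Nat.cast_ne_zero.mpr hC1pos.ne') (Nat.cast_ne_zero.mpr hC2pos.ne')
  refine ⟨hratio, ?_⟩
  have h0 : Tendsto (fun n : ℕ => ((d:ℂ) + (n:ℂ))⁻¹) atTop (𝓝 0) := by
    have h1 := tendsto_inv_atTop_nhds_zero_nat (𝕜 := ℂ)
    have h2 : Tendsto (fun n : ℕ => n + d) atTop atTop := tendsto_add_atTop_nat d
    refine (h1.comp h2).congr fun n => ?_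
    simp only [Function.comp_apply]
    push_cast
    rw [add_comm]
  set c' := (P * Q).trace / (dP : ℂ) with hc'
  have hmain : Tendsto (fun n : ℕ => c' + (Q.trace - (d:ℂ) * c') * ((d:ℂ) + (n:ℂ))⁻¹)
      atTop (𝓝 c') := by
    have := (tendsto_const_nhds (x := c') (f := atTop (α := ℕ))).add
      ((tendsto_const_nhds (x := Q.trace - (d:ℂ) * c') (f := atTop (α := ℕ))).mul h0)
    simpa using this
  refine Tendsto.congr (fun n => ?_) hmain
  rw [hratio n]
  have hd' := hdnn n
  field_simp
  ring
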